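/- Tightened value-function cut, validity (first part of Lemma 2 of the paper): let (y′,z*) be a bilevel feasible pair and let Φ_tight be the tightened value-function bound of z*. Then every bilevel feasible pair (y,z) satisfies π^F(y,z) ≥ Φ_tight(y). -/

import Mathlib

open Finset

attribute [local instance] Classical.propDecidable

/-- Data of an instance of the competitive dynamic facility location problem under
cumulative customer demand (CDFLP-CCD).  `pref j a b` means that customer `j`
strictly prefers option `a` over option `b`, where `none` is the no-service option. -/
structure CDFLP (I J : Type*) where
  /-- number of time periods; the period set is `{1, …, T}` -/
  T : ℕ
  /-- spawning demand of customer `j` at period `t` -/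
  d : J → ℕ → ℝ
  /-- reward per unit of demand captured at location `i` -/
  r : I → ℝ
  /-- splitting factor -/
  ρ : ℝ
  /-- strict preference: `pref j a b` means `a ≻_j b` -/
  pref : J → Option I → Option I → Prop

namespace CDFLP

variable {I J : Type*} [Fintype I] [Fintype J]

/-- The model hypotheses: `T ≥ 1`, nonnegative demands and rewards, `ρ ∈ [0,1]`,
and every `≻_j` is a strict linear order on `I ∪ {0}`. -/
def Valid (P : CDFLP I J) : Prop :=
  1 ≤ P.T ∧ (∀ j t, 0 ≤ P.d j t) ∧ (∀ i, 0 ≤ P.r i) ∧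
    0 ≤ P.ρ ∧ P.ρ ≤ 1 ∧ ∀ j, IsStrictTotalOrder (Option I) (P.pref j)

/-- The locations considered by customer `j`, i.e. those preferred over no service. -/
noncomputable def considered (P : CDFLP I J) (j : J) : Finset I :=
  Finset.univ.filter fun i => P.pref j (some i) none

/-- `w` is a location schedule: on the planning horizon it is `{0,1}`-valued and opens
at most one facility per period. -/
def IsSched (P : CDFLP I J) (w : I → ℕ → ℝ) : Prop :=
  ∀ t, 1 ≤ t → t ≤ P.T → (∀ i, w i t = 0 ∨ w i t = 1) ∧ (∑ i, w i t) ≤ 1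

/-- `A_j^t(y,z)`: considered locations of `j` opened by the leader or the follower
at period `t`. -/
noncomputable def captureSet (P : CDFLP I J) (y z : I → ℕ → ℝ) (j : J) (t : ℕ) : Finset I :=
  Finset.univ.filter fun i => P.pref j (some i) none ∧ (y i t = 1 ∨ z i t = 1)

/-- `t ∈ 𝒯` is a capture period of customer `j`. -/
def IsCapture (P : CDFLP I J) (y z : I → ℕ → ℝ) (j : J) (t : ℕ) : Prop :=
  1 ≤ t ∧ t ≤ P.T ∧ (P.captureSet y z j t).Nonempty

/-- `i` is the `≻_j`-greatest element of the capture set `A_j^t(y,z)`,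
i.e. `i = i*(j,t)`. -/
def IsPatron (P : CDFLP I J) (y z : I → ℕ → ℝ) (j : J) (t : ℕ) (i : I) : Prop :=
  i ∈ P.captureSet y z j t ∧
    ∀ k ∈ P.captureSet y z j t, k ≠ i → P.pref j (some i) (some k)

/-- The greatest capture period of `j` smaller than `t` (`0` if there is none). -/
noncomputable def lastCap (P : CDFLP I J) (y z : I → ℕ → ℝ) (j : J) (t : ℕ) : ℕ :=
  ((Finset.Ico 1 t).filter fun s => P.IsCapture y z j s).sup id

/-- `D_j^{ℓt}`: demand of customer `j` spawned in periods `ℓ+1, …, t`. -/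
noncomputable def D (P : CDFLP I J) (j : J) (ℓ t : ℕ) : ℝ :=
  ∑ s ∈ Finset.Icc (ℓ + 1) t, P.d j s

/-- `v_{ij}^{ℓt}(y,z)`: fraction of `D_j^{ℓt}` captured by the follower through
location `i` at period `t`. -/
noncomputable def v (P : CDFLP I J) (y z : I → ℕ → ℝ) (j : J) (i : I) (ℓ t : ℕ) : ℝ :=
  if P.IsCapture y z j t ∧ ℓ = P.lastCap y z j t ∧ P.IsPatron y z j t i ∧ z i t = 1 then
    1 - P.ρ * y i t
  else 0

/-- `u_{ij}^{ℓt}(y,z)`: fraction of `D_j^{ℓt}` captured by the leader through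
location `i` at period `t`. -/
noncomputable def u (P : CDFLP I J) (y z : I → ℕ → ℝ) (j : J) (i : I) (ℓ t : ℕ) : ℝ :=
  if P.IsCapture y z j t ∧ ℓ = P.lastCap y z j t ∧ P.IsPatron y z j t i ∧ y i t = 1 then
    1 - (1 - P.ρ) * z i t
  else 0

/-- The follower's profit `π^F(y,z)`. -/
noncomputable def profitF (P : CDFLP I J) (y z : I → ℕ → ℝ) : ℝ :=
  ∑ t ∈ Finset.Icc 1 P.T, ∑ ℓ ∈ Finset.range t, ∑ j : J, ∑ i ∈ P.considered j,
    P.r i * P.D j ℓ t * P.v y z j i ℓ t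

/-- The leader's profit `π^L(y,z)`. -/
noncomputable def profitL (P : CDFLP I J) (y z : I → ℕ → ℝ) : ℝ :=
  ∑ t ∈ Finset.Icc 1 P.T, ∑ ℓ ∈ Finset.range t, ∑ j : J, ∑ i ∈ P.considered j,
    P.r i * P.D j ℓ t * P.u y z j i ℓ t

/-- `(y,z)` is bilevel feasible: both are schedules and `z` is an optimal
reaction of the follower against `y`. -/
def BilevelFeasible (P : CDFLP I J) (y z : I → ℕ → ℝ) : Prop :=
  P.IsSched y ∧ P.IsSched z ∧ ∀ z', P.IsSched z' → P.profitF y z' ≤ P.profitF y z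


/-- `o_{ij}^{st}(y)`: the maximum of the `y`-values at locations/periods through which
the leader can intercept the demand portion spawned at period `s` and captured at
period `t` through location `i`; the maximum of an empty set is taken as `0`. -/
noncomputable def oMax (P : CDFLP I J) (y : I → ℕ → ℝ) (j : J) (i : I) (s t : ℕ) : ℝ :=
  max ((Finset.Ico s t ×ˢ P.considered j).fold max 0 fun p => y p.2 p.1)
      ((Finset.univ.filter fun k => P.pref j (some k) (some i)).fold max 0 fun k => y k t)

/-- The tightened value-function bound of the follower schedule `zs`, evaluated at a
leader schedule `y` (the `v`-values are taken against the empty leader schedule). -/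
noncomputable def tightenedBound (P : CDFLP I J) (zs y : I → ℕ → ℝ) : ℝ :=
  ∑ t ∈ Finset.Icc 1 P.T, ∑ ℓ ∈ Finset.range t, ∑ j : J, ∑ i ∈ P.considered j,
    P.r i * P.v (fun _ _ => 0) zs j i ℓ t *
      (P.D j ℓ t - (∑ s ∈ Finset.Icc (ℓ + 1) t, P.d j s * P.oMax y j i s t)
        - P.ρ * y i t * ∑ s ∈ Finset.Icc (ℓ + 1) t, P.d j s * (1 - P.oMax y j i s t))

/-! ### Auxiliary lemmas for the proof of Lemma 2 -/

private lemma exists_greatest_aux {α : Type*} (r : α → α → Prop)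
    (htr : ∀ a b c, r a b → r b c → r a c)
    (htri : ∀ a b : α, a ≠ b → r a b ∨ r b a)
    (s : Finset α) (hs : s.Nonempty) :
    ∃ a ∈ s, ∀ b ∈ s, b ≠ a → r a b := by
  classical
  induction s using Finset.induction_on with
  | empty => exact absurd hs (by simp)
  | @insert a s ha ih =>
    rcases s.eq_empty_or_nonempty with rfl | hs'
    · exact ⟨a, by simp, by simp⟩
    · obtain ⟨b, hb, hbmax⟩ := ih hs'
      by_cases hab : a = b
      · subst hab; exact absurd hb ha
      rcases htri a b hab with h | h
      · refine ⟨a, Finset.mem_insert_self _ _, ?_⟩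
        intro c hc hca
        rcases Finset.mem_insert.mp hc with rfl | hc
        · exact absurd rfl hca
        · by_cases hcb : c = b
          · subst hcb; exact h
          · exact htr _ _ _ h (hbmax c hc hcb)
      · refine ⟨b, Finset.mem_insert_of_mem hb, ?_⟩
        intro c hc hcb
        rcases Finset.mem_insert.mp hc with rfl | hc
        · exact h
        · exact hbmax c hc hcb

variable (P : CDFLP I J)

private lemma mem_considered {j : J} {i : I} :
    i ∈ P.considered j ↔ P.pref j (some i) none := by simp [considered]

private lemma mem_captureSet {y z : I → ℕ → ℝ} {j : J} {t : ℕ} {i : I} :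
    i ∈ P.captureSet y z j t ↔
      P.pref j (some i) none ∧ (y i t = 1 ∨ z i t = 1) := by simp [captureSet]

private lemma sched_nonneg {w : I → ℕ → ℝ} (hw : P.IsSched w) {t : ℕ}
    (h1 : 1 ≤ t) (h2 : t ≤ P.T) (i : I) : 0 ≤ w i t := by
  rcases (hw t h1 h2).1 i with h | h <;> rw [h] <;> norm_num

private lemma sched_unique {w : I → ℕ → ℝ} (hw : P.IsSched w) {t : ℕ}
    (h1 : 1 ≤ t) (h2 : t ≤ P.T) {a b : I} (hab : b ≠ a) (ha : w a t = 1) :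
    w b t = 0 := by
  rcases (hw t h1 h2).1 b with h | h
  · exact h
  exfalso
  have hsum := (hw t h1 h2).2
  have hpair : ({a, b} : Finset I).sum (fun i => w i t) = 2 := by
    rw [Finset.sum_pair (Ne.symm hab), ha, h]; norm_num
  have h2le : (2:ℝ) ≤ ∑ i, w i t := by
    rw [← hpair]
    exact Finset.sum_le_sum_of_subset_of_nonneg (Finset.subset_univ _)
      (fun i _ _ => P.sched_nonneg hw h1 h2 i)
  linarith

private lemma oMax_nonneg (y : I → ℕ → ℝ) (j : J) (i : I) (s t : ℕ) :
    0 ≤ P.oMax y j i s t := by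
  unfold oMax
  have h : (0:ℝ) ≤ (Finset.Ico s t ×ˢ P.considered j).fold max 0 fun p => y p.2 p.1 :=
    (Finset.le_fold_max _).mpr (Or.inl le_rfl)
  exact le_trans h (le_max_left _ _)

private lemma one_le_oMax_left (y : I → ℕ → ℝ) (j : J) (i : I) {s t s' : ℕ} {k : I}
    (hk : k ∈ P.considered j) (hs : s ≤ s') (hst : s' < t) (hy : y k s' = 1) :
    1 ≤ P.oMax y j i s t := by
  unfold oMax
  refine le_trans ?_ (le_max_left _ _)
  exact (Finset.le_fold_max _).mpr (Or.inr ⟨(s', k), by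
    simp only [Finset.mem_product, Finset.mem_Ico]
    exact ⟨⟨hs, hst⟩, hk⟩, by simp [hy]⟩)

private lemma one_le_oMax_right (y : I → ℕ → ℝ) (j : J) {i k : I} {s t : ℕ}
    (hp : P.pref j (some k) (some i)) (hy : y k t = 1) :
    1 ≤ P.oMax y j i s t := by
  unfold oMax
  refine le_trans ?_ (le_max_right _ _)
  exact (Finset.le_fold_max _).mpr (Or.inr ⟨k, by simp [hp], by simp [hy]⟩)

private lemma lastCap_lt (y z : I → ℕ → ℝ) (j : J) {t : ℕ} (ht : 1 ≤ t) :
    P.lastCap y z j t < t := by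
  have h0 : (⊥:ℕ) < t := lt_of_lt_of_le Nat.zero_lt_one ht
  unfold lastCap
  refine (Finset.sup_lt_iff h0).mpr ?_
  intro b hb
  exact (Finset.mem_Ico.mp (Finset.mem_filter.mp hb).1).2

private lemma lastCap_spec (y z : I → ℕ → ℝ) (j : J) {t s : ℕ}
    (h1 : 1 ≤ s) (hs : s ≤ P.lastCap y z j t) :
    P.lastCap y z j t ∈ Finset.Ico 1 t ∧ P.IsCapture y z j (P.lastCap y z j t) := by
  classical
  set F := (Finset.Ico 1 t).filter (fun s => P.IsCapture y z j s) with hF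
  have hne : F.Nonempty := by
    by_contra h
    rw [Finset.not_nonempty_iff_eq_empty] at h
    have h0 : P.lastCap y z j t = 0 := by
      unfold lastCap
      rw [← hF, h]; simp
    omega
  obtain ⟨b, hb, hbe⟩ := Finset.exists_mem_eq_sup F hne id
  have heq : P.lastCap y z j t = b := by unfold lastCap; rw [← hF, hbe]; rfl
  rw [heq]
  exact ⟨(Finset.mem_filter.mp hb).1, (Finset.mem_filter.mp hb).2⟩

private lemma le_lastCap (y z : I → ℕ → ℝ) (j : J) {t s : ℕ}
    (h1 : 1 ≤ s) (hst : s < t) (hc : P.IsCapture y z j s) :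
    s ≤ P.lastCap y z j t :=
  Finset.le_sup (f := id)
    (Finset.mem_filter.mpr ⟨Finset.mem_Ico.mpr ⟨h1, hst⟩, hc⟩)

private lemma v_nonneg {y z : I → ℕ → ℝ} (hy : P.IsSched y)
    (hρ0 : 0 ≤ P.ρ) (hρ1 : P.ρ ≤ 1) (j : J) (i : I) (ℓ t : ℕ) :
    0 ≤ P.v y z j i ℓ t := by
  unfold v
  split_ifs with h
  · obtain ⟨⟨h1, h2, _⟩, _⟩ := h
    rcases (hy t h1 h2).1 i with hyt | hyt <;> rw [hyt] <;> nlinarith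
  · exact le_rfl

private lemma bracket_eq (y : I → ℕ → ℝ) (j : J) (i : I) (ℓ t : ℕ) :
    P.D j ℓ t - (∑ s ∈ Finset.Icc (ℓ + 1) t, P.d j s * P.oMax y j i s t)
      - P.ρ * y i t * ∑ s ∈ Finset.Icc (ℓ + 1) t, P.d j s * (1 - P.oMax y j i s t)
    = (1 - P.ρ * y i t) *
        ∑ s ∈ Finset.Icc (ℓ + 1) t, P.d j s * (1 - P.oMax y j i s t) := by
  rw [one_sub_mul]
  congr 1
  unfold D
  rw [← Finset.sum_sub_distrib]
  exact Finset.sum_congr rfl (fun s _ => by ring)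

private lemma key (hP : P.Valid) (y zs : I → ℕ → ℝ)
    (hy : P.IsSched y) (hzs : P.IsSched zs) (j : J) {t : ℕ}
    (ht1 : 1 ≤ t) (htT : t ≤ P.T) :
    (∑ ℓ ∈ Finset.range t, ∑ i ∈ P.considered j,
      P.r i * P.v (fun _ _ => 0) zs j i ℓ t *
        (P.D j ℓ t - (∑ s ∈ Finset.Icc (ℓ + 1) t, P.d j s * P.oMax y j i s t)
          - P.ρ * y i t * ∑ s ∈ Finset.Icc (ℓ + 1) t, P.d j s * (1 - P.oMax y j i s t)))
      ≤ ∑ ℓ ∈ Finset.range t, ∑ i ∈ P.considered j,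
          P.r i * P.D j ℓ t * P.v y zs j i ℓ t := by
  obtain ⟨hT, hd, hr, hρ0, hρ1, hsto⟩ := hP
  have hD : ∀ ℓ t', 0 ≤ P.D j ℓ t' := fun ℓ t' => Finset.sum_nonneg fun s _ => hd j s
  have hRterm : ∀ ℓ i, 0 ≤ P.r i * P.D j ℓ t * P.v y zs j i ℓ t := fun ℓ i =>
    mul_nonneg (mul_nonneg (hr i) (hD ℓ t)) (P.v_nonneg hy hρ0 hρ1 j i ℓ t)
  have hRHS : (0:ℝ) ≤ ∑ ℓ ∈ Finset.range t, ∑ i ∈ P.considered j,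
      P.r i * P.D j ℓ t * P.v y zs j i ℓ t :=
    Finset.sum_nonneg fun ℓ _ => Finset.sum_nonneg fun i _ => hRterm ℓ i
  by_cases hcap : ∃ i₀ ∈ P.considered j, zs i₀ t = 1
  · obtain ⟨i₀, hi₀c, hi₀⟩ := hcap
    have huniq : ∀ i, i ≠ i₀ → zs i t = 0 := fun i hi =>
      P.sched_unique hzs ht1 htT hi hi₀
    set ℓ₀ := P.lastCap (fun _ _ => 0) zs j t with hℓ₀
    have hℓ₀t : ℓ₀ < t := P.lastCap_lt _ _ _ ht1
    -- collapse the LHS to the single nonzero term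
    have hLHS_eq : (∑ ℓ ∈ Finset.range t, ∑ i ∈ P.considered j,
        P.r i * P.v (fun _ _ => 0) zs j i ℓ t *
          (P.D j ℓ t - (∑ s ∈ Finset.Icc (ℓ + 1) t, P.d j s * P.oMax y j i s t)
            - P.ρ * y i t * ∑ s ∈ Finset.Icc (ℓ + 1) t, P.d j s * (1 - P.oMax y j i s t)))
        = P.r i₀ * P.v (fun _ _ => 0) zs j i₀ ℓ₀ t *
          (P.D j ℓ₀ t - (∑ s ∈ Finset.Icc (ℓ₀ + 1) t, P.d j s * P.oMax y j i₀ s t)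
            - P.ρ * y i₀ t *
              ∑ s ∈ Finset.Icc (ℓ₀ + 1) t, P.d j s * (1 - P.oMax y j i₀ s t)) := by
      rw [Finset.sum_eq_single_of_mem ℓ₀ (Finset.mem_range.mpr hℓ₀t)
        (fun ℓ _ hne => Finset.sum_eq_zero fun i _ => by
          have hv : P.v (fun _ _ => 0) zs j i ℓ t = 0 := by
            unfold v; rw [if_neg]; rintro ⟨_, h, _⟩; exact hne h
          rw [hv]; ring)]
      refine Finset.sum_eq_single_of_mem i₀ hi₀c (fun i _ hne => ?_)
      have hv : P.v (fun _ _ => 0) zs j i ℓ₀ t = 0 := by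
        unfold v; rw [if_neg]
        rintro ⟨_, _, _, hz⟩
        rw [huniq i hne] at hz
        norm_num at hz
      rw [hv]; ring
    have hv0 : P.v (fun _ _ => 0) zs j i₀ ℓ₀ t = 1 := by
      unfold v
      have hmem0 : i₀ ∈ P.captureSet (fun _ _ => 0) zs j t :=
        P.mem_captureSet.mpr ⟨P.mem_considered.mp hi₀c, Or.inr hi₀⟩
      have hc : P.IsCapture (fun _ _ => 0) zs j t ∧ ℓ₀ = P.lastCap (fun _ _ => 0) zs j t ∧
          P.IsPatron (fun _ _ => 0) zs j t i₀ ∧ zs i₀ t = 1 := by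
        refine ⟨⟨ht1, htT, ⟨i₀, hmem0⟩⟩, rfl, ⟨hmem0, ?_⟩, hi₀⟩
        intro k hk hkne
        obtain ⟨_, hor⟩ := P.mem_captureSet.mp hk
        rcases hor with h0 | hzk
        · norm_num at h0
        · rw [huniq k hkne] at hzk; norm_num at hzk
      rw [if_pos hc]
      norm_num
    have h1ρ : 0 ≤ 1 - P.ρ * y i₀ t := by
      rcases (hy t ht1 htT).1 i₀ with hyt | hyt <;> rw [hyt] <;> nlinarith
    -- the greatest element of the capture set under (y, zs)
    have hcapym : i₀ ∈ P.captureSet y zs j t :=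
      P.mem_captureSet.mpr ⟨P.mem_considered.mp hi₀c, Or.inr hi₀⟩
    haveI hsto' := hsto j
    obtain ⟨i₁, hi₁mem, hi₁max⟩ :=
      exists_greatest_aux (fun a b : I => P.pref j (some a) (some b))
        (fun a b c hab hbc => hsto'.trans _ _ _ hab hbc)
        (fun a b hab => by
          by_cases h1 : P.pref j (some a) (some b)
          · exact Or.inl h1
          by_cases h2 : P.pref j (some b) (some a)
          · exact Or.inr h2
          exact absurd (Option.some_injective _ (hsto'.trichotomous (some a) (some b) h1 h2)) hab)
        (P.captureSet y zs j t) ⟨i₀, hcapym⟩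
    rw [hLHS_eq, hv0, mul_one, P.bracket_eq]
    by_cases h01 : i₁ = i₀
    · -- the follower still patronizes i₀ at period t
      subst h01
      set ℓ' := P.lastCap y zs j t with hℓ'
      have hℓ't : ℓ' < t := P.lastCap_lt _ _ _ ht1
      have hvy : P.v y zs j i₁ ℓ' t = 1 - P.ρ * y i₁ t := by
        unfold v
        rw [if_pos]
        exact ⟨⟨ht1, htT, ⟨i₁, hcapym⟩⟩, rfl, ⟨hi₁mem, hi₁max⟩, hi₀⟩
      have hA : (∑ s ∈ Finset.Icc (ℓ₀ + 1) t, P.d j s * (1 - P.oMax y j i₁ s t))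
          ≤ P.D j ℓ' t := by
        have step1 : (∑ s ∈ Finset.Icc (ℓ₀ + 1) t, P.d j s * (1 - P.oMax y j i₁ s t))
            ≤ ∑ s ∈ Finset.Icc (ℓ₀ + 1) t, (if ℓ' + 1 ≤ s then P.d j s else 0) := by
          apply Finset.sum_le_sum
          intro s hs
          obtain ⟨hs1, hs2⟩ := Finset.mem_Icc.mp hs
          by_cases hsl : ℓ' + 1 ≤ s
          · rw [if_pos hsl]
            nlinarith [P.oMax_nonneg y j i₁ s t, hd j s]
          · rw [if_neg hsl]
            have hs_le : s ≤ ℓ' := by omega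
            have h1s : 1 ≤ s := by omega
            obtain ⟨hmem, hcapℓ'⟩ := P.lastCap_spec y zs j h1s hs_le
            obtain ⟨hl1, hl2⟩ := Finset.mem_Ico.mp hmem
            obtain ⟨_, _, k, hk⟩ := hcapℓ'
            obtain ⟨hkc, hor⟩ := P.mem_captureSet.mp hk
            rcases hor with hyk | hzk
            · have ho : 1 ≤ P.oMax y j i₁ s t :=
                P.one_le_oMax_left y j i₁ (P.mem_considered.mpr hkc) hs_le hl2 hyk
              nlinarith [hd j s]
            · exfalso
              have hcap0 : P.IsCapture (fun _ _ => 0) zs j ℓ' :=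
                ⟨hl1, le_trans (le_of_lt hl2) htT,
                  ⟨k, P.mem_captureSet.mpr ⟨hkc, Or.inr hzk⟩⟩⟩
              have := P.le_lastCap (fun _ _ => 0) zs j hl1 hl2 hcap0
              omega
        have step2 : (∑ s ∈ Finset.Icc (ℓ₀ + 1) t, (if ℓ' + 1 ≤ s then P.d j s else 0))
            ≤ P.D j ℓ' t := by
          rw [← Finset.sum_filter]
          unfold D
          apply Finset.sum_le_sum_of_subset_of_nonneg
          · intro s hs
            simp only [Finset.mem_filter, Finset.mem_Icc] at hs ⊢
            omega
          · exact fun s _ _ => hd j s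
        linarith
      have hterm : P.r i₁ * ((1 - P.ρ * y i₁ t) *
            (∑ s ∈ Finset.Icc (ℓ₀ + 1) t, P.d j s * (1 - P.oMax y j i₁ s t)))
          ≤ P.r i₁ * P.D j ℓ' t * P.v y zs j i₁ ℓ' t := by
        rw [hvy]
        have h1 : (1 - P.ρ * y i₁ t) *
              (∑ s ∈ Finset.Icc (ℓ₀ + 1) t, P.d j s * (1 - P.oMax y j i₁ s t))
            ≤ (1 - P.ρ * y i₁ t) * P.D j ℓ' t :=
          mul_le_mul_of_nonneg_left hA h1ρ
        calc P.r i₁ * ((1 - P.ρ * y i₁ t) *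
              (∑ s ∈ Finset.Icc (ℓ₀ + 1) t, P.d j s * (1 - P.oMax y j i₁ s t)))
            ≤ P.r i₁ * ((1 - P.ρ * y i₁ t) * P.D j ℓ' t) :=
              mul_le_mul_of_nonneg_left h1 (hr i₁)
          _ = P.r i₁ * P.D j ℓ' t * (1 - P.ρ * y i₁ t) := by ring
      refine le_trans hterm ?_
      calc P.r i₁ * P.D j ℓ' t * P.v y zs j i₁ ℓ' t
          ≤ ∑ i ∈ P.considered j, P.r i * P.D j ℓ' t * P.v y zs j i ℓ' t :=
            Finset.single_le_sum (fun i _ => hRterm ℓ' i) hi₀c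
        _ ≤ ∑ ℓ ∈ Finset.range t, ∑ i ∈ P.considered j,
              P.r i * P.D j ℓ t * P.v y zs j i ℓ t :=
            Finset.single_le_sum
              (fun ℓ _ => Finset.sum_nonneg fun i _ => hRterm ℓ i)
              (Finset.mem_range.mpr hℓ't)
    · -- the leader has intercepted period t: the LHS term is nonpositive
      have hzs1 : zs i₁ t = 0 := huniq i₁ h01
      have hy1 : y i₁ t = 1 := by
        obtain ⟨_, hor⟩ := P.mem_captureSet.mp hi₁mem
        rcases hor with h | h
        · exact h
        · rw [hzs1] at h; norm_num at h
      have hpref : P.pref j (some i₁) (some i₀) :=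
        hi₁max i₀ hcapym (fun h => h01 h.symm)
      have hAle : (∑ s ∈ Finset.Icc (ℓ₀ + 1) t, P.d j s * (1 - P.oMax y j i₀ s t)) ≤ 0 := by
        apply Finset.sum_nonpos
        intro s _
        have ho : 1 ≤ P.oMax y j i₀ s t := P.one_le_oMax_right y j hpref hy1
        exact mul_nonpos_of_nonneg_of_nonpos (hd j s) (by linarith)
      have : P.r i₀ * ((1 - P.ρ * y i₀ t) *
            (∑ s ∈ Finset.Icc (ℓ₀ + 1) t, P.d j s * (1 - P.oMax y j i₀ s t))) ≤ 0 :=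
        mul_nonpos_of_nonneg_of_nonpos (hr i₀)
          (mul_nonpos_of_nonneg_of_nonpos h1ρ hAle)
      linarith
  · -- no follower capture at t: the LHS vanishes
    push_neg at hcap
    have hLHS0 : (∑ ℓ ∈ Finset.range t, ∑ i ∈ P.considered j,
        P.r i * P.v (fun _ _ => 0) zs j i ℓ t *
          (P.D j ℓ t - (∑ s ∈ Finset.Icc (ℓ + 1) t, P.d j s * P.oMax y j i s t)
            - P.ρ * y i t * ∑ s ∈ Finset.Icc (ℓ + 1) t, P.d j s * (1 - P.oMax y j i s t)))
        = 0 := by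
      apply Finset.sum_eq_zero
      intro ℓ _
      apply Finset.sum_eq_zero
      intro i hi
      have hv : P.v (fun _ _ => 0) zs j i ℓ t = 0 := by
        unfold v
        rw [if_neg]
        rintro ⟨_, _, _, hz⟩
        exact hcap i hi hz
      rw [hv]; ring
    rw [hLHS0]
    exact hRHS

/-- **Lemma 2, validity.**  The tightened value-function cut built from a bilevel
feasible pair `(y', zs)` holds for every bilevel feasible pair `(y, z)`. -/
theorem tightened_cut_valid (P : CDFLP I J) (hP : P.Valid)
    (y' zs : I → ℕ → ℝ) (hfeas : P.BilevelFeasible y' zs)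
    (y z : I → ℕ → ℝ) (hyz : P.BilevelFeasible y z) :
    P.tightenedBound zs y ≤ P.profitF y z := by
  have hzs_sched : P.IsSched zs := hfeas.2.1
  have h2 : P.profitF y zs ≤ P.profitF y z := hyz.2.2 zs hzs_sched
  refine le_trans ?_ h2
  unfold tightenedBound profitF
  apply Finset.sum_le_sum
  intro t ht
  obtain ⟨ht1, htT⟩ := Finset.mem_Icc.mp ht
  calc (∑ ℓ ∈ Finset.range t, ∑ j : J, ∑ i ∈ P.considered j,
        P.r i * P.v (fun _ _ => 0) zs j i ℓ t *
          (P.D j ℓ t - (∑ s ∈ Finset.Icc (ℓ + 1) t, P.d j s * P.oMax y j i s t)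
            - P.ρ * y i t * ∑ s ∈ Finset.Icc (ℓ + 1) t, P.d j s * (1 - P.oMax y j i s t)))
      = ∑ j : J, ∑ ℓ ∈ Finset.range t, ∑ i ∈ P.considered j,
        P.r i * P.v (fun _ _ => 0) zs j i ℓ t *
          (P.D j ℓ t - (∑ s ∈ Finset.Icc (ℓ + 1) t, P.d j s * P.oMax y j i s t)
            - P.ρ * y i t * ∑ s ∈ Finset.Icc (ℓ + 1) t, P.d j s * (1 - P.oMax y j i s t)) :=
        Finset.sum_comm
    _ ≤ ∑ j : J, ∑ ℓ ∈ Finset.range t, ∑ i ∈ P.considered j,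
          P.r i * P.D j ℓ t * P.v y zs j i ℓ t :=
        Finset.sum_le_sum fun j _ => P.key hP y zs hyz.1 hzs_sched j ht1 htT
    _ = ∑ ℓ ∈ Finset.range t, ∑ j : J, ∑ i ∈ P.considered j,
          P.r i * P.D j ℓ t * P.v y zs j i ℓ t := Finset.sum_comm

end CDFLP
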